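/- Let $X_1,\ldots,X_m$ be independent random variables, each with a distribution symmetric about $0$ (i.e., $X_i$ and $-X_i$ have the same distribution). Then for every $t > 0$: $\Pr\Big(\frac{\sum_{i=1}^m X_i}{\sqrt{\sum_{i=1}^m X_i^2}} > t\Big) \leq \exp(-t^2/2)$, where the event is understood to be contained in $\{\sum_{i=1}^m X_i^2 > 0\}$. -/

import Mathlib

open MeasureTheory ProbabilityTheory Finset
open scoped NNReal ENNReal


/-- sign of a boolean -/
def sgn (b : Bool) : ℝ := if b then 1 else -1

lemma sgn_sq (b : Bool) : sgn b ^ 2 = 1 := by cases b <;> simp [sgn]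

lemma rademacher_count_le (m : ℕ) (x : Fin m → ℝ) (t : ℝ) (ht : 0 < t) :
    ((Finset.univ.filter (fun ε : Fin m → Bool =>
        0 < ∑ i, x i ^ 2 ∧
          (∑ i, sgn (ε i) * x i) / Real.sqrt (∑ i, x i ^ 2) > t)).card : ℝ)
      ≤ 2 ^ m * Real.exp (-t ^ 2 / 2) := by
  by_cases h : 0 < ∑ i, x i ^ 2
  · set v := Real.sqrt (∑ i, x i ^ 2) with hv_def
    have hv : 0 < v := Real.sqrt_pos.2 h
    have hv2 : v ^ 2 = ∑ i, x i ^ 2 := Real.sq_sqrt h.le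
    set lam := t / v with hlam_def
    have hlamv : lam * v = t := by rw [hlam_def, div_mul_cancel₀ t hv.ne']
    -- each element of the filter contributes at least exp(lam*S - t^2) ≥ 1
    have key : ∀ ε : Fin m → Bool,
        ε ∈ Finset.univ.filter (fun ε : Fin m → Bool =>
          0 < ∑ i, x i ^ 2 ∧ (∑ i, sgn (ε i) * x i) / v > t) →
        (1 : ℝ) ≤ Real.exp (lam * ∑ i, sgn (ε i) * x i - t ^ 2) := by
      intro ε hε
      have h2 := (Finset.mem_filter.1 hε).2.2
      have hS : t * v < ∑ i, sgn (ε i) * x i := by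
        rw [gt_iff_lt, lt_div_iff₀ hv] at h2; exact h2
      have : (0:ℝ) ≤ lam * ∑ i, sgn (ε i) * x i - t ^ 2 := by
        have := mul_lt_mul_of_pos_left hS (div_pos ht hv)
        rw [← hlam_def] at this
        nlinarith [hlamv]
      calc (1:ℝ) = Real.exp 0 := by simp
        _ ≤ _ := Real.exp_le_exp.2 this
    calc ((Finset.univ.filter (fun ε : Fin m → Bool =>
            0 < ∑ i, x i ^ 2 ∧ (∑ i, sgn (ε i) * x i) / v > t)).card : ℝ)
        = ∑ ε ∈ Finset.univ.filter (fun ε : Fin m → Bool =>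
            0 < ∑ i, x i ^ 2 ∧ (∑ i, sgn (ε i) * x i) / v > t), (1:ℝ) := by simp
      _ ≤ ∑ ε ∈ Finset.univ.filter (fun ε : Fin m → Bool =>
            0 < ∑ i, x i ^ 2 ∧ (∑ i, sgn (ε i) * x i) / v > t),
            Real.exp (lam * ∑ i, sgn (ε i) * x i - t ^ 2) :=
          Finset.sum_le_sum key
      _ ≤ ∑ ε : Fin m → Bool, Real.exp (lam * ∑ i, sgn (ε i) * x i - t ^ 2) :=
          Finset.sum_le_sum_of_subset_of_nonneg (Finset.filter_subset _ _)
            (fun _ _ _ => (Real.exp_pos _).le)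
      _ = Real.exp (-t^2) * ∑ ε : Fin m → Bool, ∏ i, Real.exp (lam * (sgn (ε i) * x i)) := by
          rw [Finset.mul_sum]
          refine Finset.sum_congr rfl fun ε _ => ?_
          rw [← Real.exp_sum]
          rw [← Real.exp_add]
          congr 1
          rw [Finset.mul_sum]
          ring
      _ = Real.exp (-t^2) * ∏ i, (Real.exp (lam * x i) + Real.exp (-(lam * x i))) := by
          congr 1
          rw [← Fintype.piFinset_univ]
          have hps := Finset.prod_univ_sum (fun _ : Fin m => (Finset.univ : Finset Bool))
            (fun i b => Real.exp (lam * (sgn b * x i)))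
          rw [← hps]
          refine Finset.prod_congr rfl fun i _ => ?_
          rw [Fintype.sum_bool]
          simp [sgn]
      _ ≤ Real.exp (-t^2) * ∏ i, (2 * Real.exp ((lam * x i) ^ 2 / 2)) := by
          refine mul_le_mul_of_nonneg_left (Finset.prod_le_prod
            (fun i _ => by positivity) fun i _ => ?_) (Real.exp_pos _).le
          have := Real.cosh_le_exp_half_sq (lam * x i)
          rw [Real.cosh_eq] at this
          linarith
      _ = 2 ^ m * Real.exp (-t ^ 2 / 2) := by
          rw [Finset.prod_mul_distrib, Finset.prod_const, ← Real.exp_sum]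
          have : ∑ i, (lam * x i) ^ 2 / 2 = t ^ 2 / 2 := by
            rw [← Finset.sum_div]
            congr 1
            have : ∑ i, (lam * x i)^2 = lam ^2 * ∑ i, x i ^2 := by
              rw [Finset.mul_sum]; exact Finset.sum_congr rfl fun i _ => by ring
            rw [this, ← hv2]
            have : lam ^ 2 * v ^ 2 = (lam * v)^2 := by ring
            rw [this, hlamv]
          rw [this, Finset.card_univ, Fintype.card_fin]
          rw [mul_comm, mul_assoc, ← Real.exp_add]
          ring_nf
  · have : (Finset.univ.filter (fun ε : Fin m → Bool =>
        0 < ∑ i, x i ^ 2 ∧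
          (∑ i, sgn (ε i) * x i) / Real.sqrt (∑ i, x i ^ 2) > t)) = ∅ := by
      apply Finset.filter_false_of_mem
      intro ε _ hc
      exact h hc.1
    rw [this]
    simp
    positivity




lemma sgn_mul_sgn (b : Bool) (a : ℝ) : sgn b * (sgn b * a) = a := by
  cases b <;> simp [sgn]

lemma sgn_mul_sq (b : Bool) (a : ℝ) : (sgn b * a) ^ 2 = a ^ 2 := by
  cases b <;> simp [sgn]

lemma joint_law_eq
    {Ω : Type*} [MeasureSpace Ω] [IsProbabilityMeasure (ℙ : Measure Ω)]
    (m : ℕ) (X : Fin m → Ω → ℝ) (hXmeas : ∀ i, Measurable (X i))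
    (hXindep : iIndepFun X ℙ)
    (hXsymm : ∀ i, Measure.map (X i) ℙ = Measure.map (fun ω => -X i ω) ℙ)
    (ε : Fin m → Bool) :
    Measure.map (fun ω i => sgn (ε i) * X i ω) ℙ
      = Measure.pi (fun i => Measure.map (X i) ℙ) := by
  haveI : ∀ i, IsProbabilityMeasure (Measure.map (X i) ℙ) :=
    fun i => Measure.isProbabilityMeasure_map (hXmeas i).aemeasurable
  have hYmeas : ∀ i, Measurable (fun ω => sgn (ε i) * X i ω) :=
    fun i => (measurable_const.mul (hXmeas i))
  have hYindep : iIndepFun (fun i ω => sgn (ε i) * X i ω) ℙ := by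
    have := hXindep.comp (fun i y => sgn (ε i) * y)
      (fun i => measurable_const.mul measurable_id)
    exact this
  have hmarg : ∀ i, Measure.map (fun ω => sgn (ε i) * X i ω) ℙ = Measure.map (X i) ℙ := by
    intro i
    cases h : ε i
    · simp only [sgn, h, Bool.false_eq_true, if_false, neg_one_mul]
      exact (hXsymm i).symm
    · simp [sgn, h]
  refine (Measure.pi_eq fun s hs => ?_).symm
  have hjm : Measurable (fun ω i => sgn (ε i) * X i ω) :=
    measurable_pi_lambda _ hYmeas
  rw [Measure.map_apply hjm (MeasurableSet.univ_pi hs)]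
  have hpre : (fun ω i => sgn (ε i) * X i ω) ⁻¹' (Set.pi Set.univ s)
      = ⋂ i ∈ Finset.univ, (fun ω => sgn (ε i) * X i ω) ⁻¹' s i := by
    ext ω; simp [Set.mem_pi]
  rw [hpre, hYindep.measure_inter_preimage_eq_mul Finset.univ (fun i _ => hs i)]
  exact Finset.prod_congr rfl fun i _ => by
    rw [← Measure.map_apply (hYmeas i) (hs i), hmarg i]



/-- Sub-Gaussian tail bound for the self-normalized sum of
independent random variables that are symmetric about `0`: for every `t > 0`,
`P(∑ X_i / √(∑ X_i²) > t) ≤ exp(-t²/2)` (the event being contained in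
`{∑ X_i² > 0}`). -/
theorem selfnormalized_subgaussian_symmetric
    {Ω : Type*} [MeasureSpace Ω] [IsProbabilityMeasure (ℙ : Measure Ω)]
    (m : ℕ) (hm : 1 ≤ m)
    (X : Fin m → Ω → ℝ) (hXmeas : ∀ i, Measurable (X i))
    (hXindep : iIndepFun X ℙ)
    -- each `X_i` is symmetric about `0`
    (hXsymm : ∀ i, Measure.map (X i) ℙ = Measure.map (fun ω => -X i ω) ℙ)
    (t : ℝ) (ht : 0 < t) :
    ℙ {ω | 0 < ∑ i, (X i ω) ^ 2 ∧
        (∑ i, X i ω) / Real.sqrt (∑ i, (X i ω) ^ 2) > t}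
      ≤ ENNReal.ofReal (Real.exp (-t ^ 2 / 2)) := by
  classical
  haveI : ∀ i, IsProbabilityMeasure (Measure.map (X i) ℙ) :=
    fun i => Measure.isProbabilityMeasure_map (hXmeas i).aemeasurable
  set μ : Measure (Fin m → ℝ) := Measure.pi (fun i => Measure.map (X i) ℙ) with hμ
  haveI : IsProbabilityMeasure μ := by rw [hμ]; infer_instance
  set E : (Fin m → Bool) → Set (Fin m → ℝ) := fun ε =>
    {y | 0 < ∑ i, y i ^ 2 ∧ (∑ i, sgn (ε i) * y i) / Real.sqrt (∑ i, y i ^ 2) > t} with hE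
  have hEmeas : ∀ ε, MeasurableSet (E ε) := by
    intro ε
    have h1 : Measurable fun y : Fin m → ℝ => ∑ i, y i ^ 2 :=
      Finset.measurable_sum _ fun i _ => ((measurable_pi_apply i).pow measurable_const)
    have h2 : Measurable fun y : Fin m → ℝ => (∑ i, sgn (ε i) * y i) / Real.sqrt (∑ i, y i ^ 2) :=
      (Finset.measurable_sum _ fun i _ =>
        (measurable_const.mul (measurable_pi_apply i))).div
        (Real.continuous_sqrt.measurable.comp h1)
    exact (measurableSet_lt measurable_const h1).inter (measurableSet_lt measurable_const h2)
  -- each signed event has the same μ-measure as the original event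
  have hkey : ∀ ε : Fin m → Bool,
      μ (E ε) = ℙ {ω | 0 < ∑ i, (X i ω) ^ 2 ∧
        (∑ i, X i ω) / Real.sqrt (∑ i, (X i ω) ^ 2) > t} := by
    intro ε
    have hjm : Measurable (fun ω i => sgn (ε i) * X i ω) :=
      measurable_pi_lambda _ fun i => measurable_const.mul (hXmeas i)
    rw [hμ, ← joint_law_eq m X hXmeas hXindep hXsymm ε,
      Measure.map_apply hjm (hEmeas ε)]
    congr 1
    ext ω
    simp only [hE, Set.mem_preimage, Set.mem_setOf_eq]
    have e1 : ∑ i, (sgn (ε i) * X i ω) ^ 2 = ∑ i, X i ω ^ 2 :=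
      Finset.sum_congr rfl fun i _ => sgn_mul_sq _ _
    have e2 : ∑ i, sgn (ε i) * (sgn (ε i) * X i ω) = ∑ i, X i ω :=
      Finset.sum_congr rfl fun i _ => sgn_mul_sgn _ _
    rw [e1, e2]
  -- sum over all sign vectors
  have hsum : (2 ^ m : ℝ≥0∞) * ℙ {ω | 0 < ∑ i, (X i ω) ^ 2 ∧
        (∑ i, X i ω) / Real.sqrt (∑ i, (X i ω) ^ 2) > t}
      = ∑ ε : Fin m → Bool, μ (E ε) := by
    rw [Finset.sum_congr rfl fun ε _ => hkey ε, Finset.sum_const, Finset.card_univ]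
    simp [Fintype.card_fun, nsmul_eq_mul]
  -- bound the sum via the pointwise Rademacher count
  have hbound : ∑ ε : Fin m → Bool, μ (E ε)
      ≤ (2 ^ m : ℝ≥0∞) * ENNReal.ofReal (Real.exp (-t ^ 2 / 2)) := by
    have h1 : ∀ ε : Fin m → Bool, μ (E ε) = ∫⁻ y, (E ε).indicator (fun _ => 1) y ∂μ :=
      fun ε => (lintegral_indicator_one (hEmeas ε)).symm
    calc ∑ ε : Fin m → Bool, μ (E ε)
        = ∫⁻ y, ∑ ε : Fin m → Bool, (E ε).indicator (fun _ => 1) y ∂μ := by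
          rw [lintegral_finset_sum _ fun ε _ =>
            (measurable_const.indicator (hEmeas ε))]
          exact Finset.sum_congr rfl fun ε _ => h1 ε
      _ ≤ ∫⁻ _, (2 ^ m : ℝ≥0∞) * ENNReal.ofReal (Real.exp (-t ^ 2 / 2)) ∂μ := by
          refine lintegral_mono fun y => ?_
          have hcount : ∑ ε : Fin m → Bool, (E ε).indicator (fun _ => (1:ℝ≥0∞)) y
              = ((Finset.univ.filter (fun ε : Fin m → Bool => y ∈ E ε)).card : ℝ≥0∞) := by
            simp [Set.indicator_apply, Finset.sum_boole]
            convert Finset.sum_boole (R := ℝ≥0∞) (fun ε : Fin m → Bool => y ∈ E ε) Finset.univ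
          rw [hcount]
          have hD := rademacher_count_le m y t ht
          have hfilter : (Finset.univ.filter (fun ε : Fin m → Bool => y ∈ E ε))
              = (Finset.univ.filter (fun ε : Fin m → Bool =>
                  0 < ∑ i, y i ^ 2 ∧
                    (∑ i, sgn (ε i) * y i) / Real.sqrt (∑ i, y i ^ 2) > t)) := by
            apply Finset.filter_congr
            intro ε _
            simp [hE]
          rw [hfilter]
          calc ((Finset.univ.filter _).card : ℝ≥0∞)
              = ENNReal.ofReal ((Finset.univ.filter (fun ε : Fin m → Bool =>
                  0 < ∑ i, y i ^ 2 ∧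
                    (∑ i, sgn (ε i) * y i) / Real.sqrt (∑ i, y i ^ 2) > t)).card : ℝ) := by
                rw [ENNReal.ofReal_natCast]
            _ ≤ ENNReal.ofReal (2 ^ m * Real.exp (-t ^ 2 / 2)) := ENNReal.ofReal_le_ofReal hD
            _ = (2 ^ m : ℝ≥0∞) * ENNReal.ofReal (Real.exp (-t ^ 2 / 2)) := by
                rw [ENNReal.ofReal_mul (by positivity)]
                congr 1
                rw [ENNReal.ofReal_pow (by norm_num)]
                norm_num
      _ = (2 ^ m : ℝ≥0∞) * ENNReal.ofReal (Real.exp (-t ^ 2 / 2)) := by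
          rw [lintegral_const, measure_univ, mul_one]
  have h2m0 : (2 ^ m : ℝ≥0∞) ≠ 0 := by positivity
  have h2mtop : (2 ^ m : ℝ≥0∞) ≠ ⊤ := by
    exact ENNReal.pow_ne_top (by norm_num)
  rw [← ENNReal.mul_le_mul_iff_right h2m0 h2mtop]
  rw [hsum]
  exact hbound.trans_eq rfl |>.trans (le_refl _) |>.trans_eq rfl
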